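/- (Invariant kernel from unlabelled templates) Assume the kernel k is unitary with respect to G. Let t_1,…,t_M ∈ E be templates and suppose x, y ∈ E satisfy φ(x) = Σ_{i=1}^M (u_x)_i φ(t_i) and φ(y) = Σ_{i=1}^M (u_y)_i φ(t_i) for coefficient vectors u_x, u_y ∈ ℝ^M. Then k_Ψ(x,y) = ∫_G ⟨ Σ_{i=1}^M (u_x)_i φ(g t_i), Σ_{j=1}^M (u_y)_j φ(t_j) ⟩ dμ(g) = Σ_{i=1}^M Σ_{j=1}^M (u_x)_i (u_y)_j ∫_G k(g t_i, t_j) dμ(g); i.e., the G-invariant kernel can be computed using only transformed versions of the unlabelled template set. -/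

import Mathlib

open MeasureTheory RealInnerProductSpace

lemma integrable_of_cont_compact {X F : Type*} [TopologicalSpace X] [CompactSpace X]
    [MeasurableSpace X] [OpensMeasurableSpace X] [NormedAddCommGroup F]
    (μ : Measure X) [IsFiniteMeasure μ] (f : X → F) (hf : Continuous f) :
    Integrable f μ := by
  borelize F
  have hs : StronglyMeasurable f := by
    rw [stronglyMeasurable_iff_measurable_separable]
    exact ⟨hf.measurable, (isCompact_range hf).isSeparable⟩
  obtain ⟨C, hC⟩ := isCompact_univ.exists_bound_of_continuousOn hf.continuousOn
  exact ⟨hs.aestronglyMeasurable,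
    HasFiniteIntegral.of_bounded (C := C) (ae_of_all _ fun x => hC x (Set.mem_univ x))⟩

/-- Invariant kernel from unlabelled templates: for a unitary kernel,
if `φ x = Σᵢ (u_x)ᵢ φ(tᵢ)` and `φ y = Σᵢ (u_y)ᵢ φ(tᵢ)` for templates `t₁,…,t_M`, then
`k_Ψ(x,y) = ∫_G ⟪Σᵢ (u_x)ᵢ φ(g tᵢ), Σⱼ (u_y)ⱼ φ(tⱼ)⟫ dμ(g)
         = Σᵢ Σⱼ (u_x)ᵢ (u_y)ⱼ ∫_G k(g tᵢ, tⱼ) dμ(g)`. -/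
theorem invariant_kernel_from_templates
    {E : Type*} [NormedAddCommGroup E] [InnerProductSpace ℝ E] [FiniteDimensional ℝ E]
    {G : Type*} [Group G] [TopologicalSpace G] [IsTopologicalGroup G] [CompactSpace G]
    [MeasurableSpace G] [BorelSpace G]
    (μ : Measure G) [IsProbabilityMeasure μ] [μ.IsMulLeftInvariant] [μ.IsMulRightInvariant]
    [μ.IsInvInvariant]
    (ρ : G →* (E ≃ₗᵢ[ℝ] E)) (hρ : Continuous fun p : G × E => ρ p.1 p.2)
    {H : Type*} [NormedAddCommGroup H] [InnerProductSpace ℝ H] [CompleteSpace H]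
    (φ : E → H) (hφ : Continuous φ)
    (hunitary : ∀ (g : G) (x y : E), ⟪φ (ρ g x), φ (ρ g y)⟫ = ⟪φ x, φ y⟫)
    (Φ : E → H) (hΦ : ∀ x : E, Φ x = ∫ g, φ (ρ g x) ∂μ)
    (kΨ : E → E → ℝ) (hkΨ : ∀ x y : E, kΨ x y = ⟪Φ x, Φ y⟫)
    (M : ℕ) (t : Fin M → E) (x y : E) (ux uy : Fin M → ℝ)
    (hx : φ x = ∑ i, ux i • φ (t i)) (hy : φ y = ∑ i, uy i • φ (t i)) :
    kΨ x y = ∫ g, ⟪∑ i, ux i • φ (ρ g (t i)), ∑ j, uy j • φ (t j)⟫ ∂μ ∧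
    kΨ x y = ∑ i, ∑ j, ux i * uy j * ∫ g, ⟪φ (ρ g (t i)), φ (t j)⟫ ∂μ := by
  -- continuity and integrability of the orbit maps
  have hcont : ∀ z : E, Continuous fun g : G => φ (ρ g z) := fun z =>
    hφ.comp (hρ.comp (continuous_id.prodMk continuous_const))
  have hint : ∀ z : E, Integrable (fun g : G => φ (ρ g z)) μ := fun z =>
    integrable_of_cont_compact μ _ (hcont z)
  have hintR : ∀ z w : E, Integrable (fun g : G => ⟪φ (ρ g z), φ w⟫) μ := fun z w =>
    integrable_of_cont_compact μ _ ((hcont z).inner continuous_const)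
  -- action identities
  have hmul : ∀ (a b : G) (z : E), ρ (a * b) z = ρ a (ρ b z) := fun a b z => by
    rw [map_mul]; rfl
  have hone : ∀ z : E, ρ (1 : G) z = z := fun z => by rw [map_one]; rfl
  -- key unitarity identities
  have hunit1 : ∀ (g h : G), ⟪φ (ρ g x), φ (ρ h y)⟫ = ⟪φ x, φ (ρ (g⁻¹ * h) y)⟫ := by
    intro g h
    have h1 := hunitary g⁻¹ (ρ g x) (ρ h y)
    rw [← hmul, ← hmul, inv_mul_cancel, hone] at h1
    exact h1.symm
  have hunit2 : ∀ (z : E) (h : G), ⟪φ z, φ (ρ h⁻¹ y)⟫ = ⟪φ (ρ h z), φ y⟫ := by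
    intro z h
    have h1 := hunitary h⁻¹ (ρ h z) y
    rw [← hmul, inv_mul_cancel, hone] at h1
    exact h1
  -- kΨ x y = ⟪φ x, Φ y⟫
  have key0 : kΨ x y = ⟪φ x, Φ y⟫ := by
    have h1 : ∀ g : G, ⟪Φ y, φ (ρ g x)⟫ = ⟪φ x, Φ y⟫ := by
      intro g
      rw [real_inner_comm]
      conv_lhs => rw [hΦ y, ← integral_inner (hint y)]
      conv_rhs => rw [hΦ y, ← integral_inner (hint y)]
      calc ∫ h, ⟪φ (ρ g x), φ (ρ h y)⟫ ∂μ
          = ∫ h, ⟪φ x, φ (ρ (g⁻¹ * h) y)⟫ ∂μ :=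
            integral_congr_ae (ae_of_all _ fun h => hunit1 g h)
        _ = ∫ h, ⟪φ x, φ (ρ h y)⟫ ∂μ :=
            integral_mul_left_eq_self (fun h => ⟪φ x, φ (ρ h y)⟫) g⁻¹
    rw [hkΨ]
    conv_lhs => rw [hΦ x, real_inner_comm, ← integral_inner (hint x)]
    rw [integral_congr_ae (ae_of_all _ h1), integral_const]
    simp
  -- ⟪φ z, Φ y⟫ = ∫ g, ⟪φ (ρ g z), φ y⟫
  have key1 : ∀ z : E, ⟪φ z, Φ y⟫ = ∫ g, ⟪φ (ρ g z), φ y⟫ ∂μ := by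
    intro z
    rw [hΦ y, ← integral_inner (hint y)]
    calc ∫ h, ⟪φ z, φ (ρ h y)⟫ ∂μ
        = ∫ h, ⟪φ z, φ (ρ h⁻¹ y)⟫ ∂μ :=
          (integral_inv_eq_self (fun h => ⟪φ z, φ (ρ h y)⟫) μ).symm
      _ = ∫ h, ⟪φ (ρ h z), φ y⟫ ∂μ :=
          integral_congr_ae (ae_of_all _ fun h => hunit2 z h)
  -- main formula
  have main : kΨ x y = ∑ i, ux i * ∫ g, ⟪φ (ρ g (t i)), φ y⟫ ∂μ := by
    rw [key0, hx, sum_inner]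
    refine Finset.sum_congr rfl fun i _ => ?_
    rw [real_inner_smul_left, key1]
  constructor
  · -- first conjunct
    rw [main]
    have : ∀ g : G, ⟪∑ i, ux i • φ (ρ g (t i)), ∑ j, uy j • φ (t j)⟫
        = ∑ i, ux i * ⟪φ (ρ g (t i)), φ y⟫ := by
      intro g
      rw [← hy, sum_inner]
      exact Finset.sum_congr rfl fun i _ => real_inner_smul_left _ _ _
    rw [integral_congr_ae (ae_of_all _ this),
      integral_finset_sum _ fun i _ => (hintR (t i) y).const_mul (ux i)]
    refine Finset.sum_congr rfl fun i _ => ?_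
    rw [integral_const_mul]
  · -- second conjunct
    rw [main]
    refine Finset.sum_congr rfl fun i _ => ?_
    have : ∀ g : G, ⟪φ (ρ g (t i)), φ y⟫ = ∑ j, uy j * ⟪φ (ρ g (t i)), φ (t j)⟫ := by
      intro g
      rw [hy, inner_sum]
      exact Finset.sum_congr rfl fun j _ => real_inner_smul_right _ _ _
    rw [integral_congr_ae (ae_of_all _ this),
      integral_finset_sum _ fun j _ => (hintR (t i) (t j)).const_mul (uy j),
      Finset.mul_sum]
    refine Finset.sum_congr rfl fun j _ => ?_
    rw [integral_const_mul]
    ring
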